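/- Let n, m be positive integers, E ⊆ [n] × [m], and let p ∈ ℤ^n, q ∈ ℤ^m be vectors with nonnegative integer entries satisfying Σ_{i∈[n]} p_i = Σ_{j∈[m]} q_j. For S ⊆ [n] define the neighborhood N(S) = {t ∈ [m] : ∃ s ∈ S, (s,t) ∈ E}. If for every subset S ⊆ [n] one has Σ_{s∈S} p_s ≤ Σ_{t∈N(S)} q_t, then there exists a matrix Z ∈ ℝ^{n×m} with Z_{ij} ≥ 0 for all i,j, Z_{ij} = 0 whenever (i,j) ∉ E, Z·1 = p, and Zᵀ·1 = q. -/

import Mathlib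

open scoped Classical

open Finset

lemma fiber_card {n : ℕ} (k : Fin n → ℕ) (i : Fin n) :
    (Finset.univ.filter fun a : (Σ i, Fin (k i)) => a.1 = i).card = k i := by
  have h : (Finset.univ.filter fun a : (Σ i, Fin (k i)) => a.1 = i)
      = Finset.univ.map ⟨fun x : Fin (k i) => ⟨i, x⟩, by
          intro x y h
          simpa using h⟩ := by
    ext ⟨i', x⟩
    simp only [Finset.mem_filter, Finset.mem_univ, true_and, Finset.mem_map,
      Function.Embedding.coeFn_mk]
    constructor
    · rintro rfl; exact ⟨x, rfl⟩
    · rintro ⟨y, h⟩; cases h; rfl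
  rw [h, Finset.card_map, Finset.card_univ, Fintype.card_fin]

/-- Hall's marriage theorem for weighted (integer) sources and sinks. -/
theorem stmt_2 (n m : ℕ) (hn : 0 < n) (hm : 0 < m)
    (E : Set (Fin n × Fin m)) (p : Fin n → ℤ) (q : Fin m → ℤ)
    (hp : ∀ i, 0 ≤ p i) (hq : ∀ j, 0 ≤ q j)
    (hsum : ∑ i, p i = ∑ j, q j)
    (hall : ∀ S : Finset (Fin n),
      ∑ s ∈ S, p s ≤
        ∑ t ∈ Finset.univ.filter (fun t => ∃ s ∈ S, (s, t) ∈ E), q t) :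
    ∃ Z : Matrix (Fin n) (Fin m) ℝ,
      (∀ i j, 0 ≤ Z i j) ∧
      (∀ i j, (i, j) ∉ E → Z i j = 0) ∧
      (∀ i, ∑ j, Z i j = (p i : ℝ)) ∧
      (∀ j, ∑ i, Z i j = (q j : ℝ)) := by
  classical
  -- replicate each source i into (p i).toNat copies, each sink j into (q j).toNat copies
  set t : (Σ i : Fin n, Fin (p i).toNat) → Finset (Σ j : Fin m, Fin (q j).toNat) :=
    fun a => univ.filter (fun b => (a.1, b.1) ∈ E) with ht
  have hall' : ∀ A : Finset (Σ i : Fin n, Fin (p i).toNat), A.card ≤ (A.biUnion t).card := by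
    intro A
    set S : Finset (Fin n) := A.image Sigma.fst with hS
    have h1 : A.card ≤ ∑ i ∈ S, (p i).toNat := by
      rw [card_eq_sum_card_fiberwise (f := Sigma.fst) (t := S)
        (fun a ha => mem_image_of_mem _ ha)]
      refine Finset.sum_le_sum fun i _ => ?_
      calc (A.filter fun a => a.1 = i).card
          ≤ (univ.filter fun a : (Σ i : Fin n, Fin (p i).toNat) => a.1 = i).card :=
            card_le_card (filter_subset_filter _ (subset_univ A))
        _ = (p i).toNat := fiber_card _ i
    have hbU : A.biUnion t
        = univ.filter (fun b : (Σ j : Fin m, Fin (q j).toNat) => ∃ s ∈ S, (s, b.1) ∈ E) := by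
      ext b
      simp only [mem_biUnion, mem_filter, mem_univ, true_and, ht, hS, mem_image]
      constructor
      · rintro ⟨a, ha, hb⟩; exact ⟨a.1, ⟨a, ha, rfl⟩, hb⟩
      · rintro ⟨s, ⟨a, ha, rfl⟩, hb⟩; exact ⟨a, ha, hb⟩
    have h2 : (A.biUnion t).card
        = ∑ j ∈ univ.filter (fun t => ∃ s ∈ S, (s, t) ∈ E), (q j).toNat := by
      rw [hbU, card_eq_sum_card_fiberwise (f := Sigma.fst)
        (t := univ.filter (fun t => ∃ s ∈ S, (s, t) ∈ E))
        (fun b hb => by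
          simp only [Finset.mem_coe, mem_filter, mem_univ, true_and] at hb ⊢
          exact hb)]
      refine Finset.sum_congr rfl fun j hj => ?_
      simp only [mem_filter, mem_univ, true_and] at hj
      rw [Finset.filter_filter]
      have heq : (univ.filter fun b : (Σ j : Fin m, Fin (q j).toNat) =>
          (∃ s ∈ S, (s, b.1) ∈ E) ∧ b.1 = j)
          = univ.filter fun b : (Σ j : Fin m, Fin (q j).toNat) => b.1 = j := by
        ext b
        simp only [mem_filter, mem_univ, true_and]
        constructor
        · exact fun h => h.2
        · exact fun h => ⟨h ▸ hj, h⟩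
      rw [heq, fiber_card]
    have h3 : (∑ i ∈ S, (p i).toNat : ℤ)
        ≤ (∑ j ∈ univ.filter (fun t => ∃ s ∈ S, (s, t) ∈ E), (q j).toNat : ℤ) := by
      push_cast
      rw [Finset.sum_congr rfl (fun i _ => Int.toNat_of_nonneg (hp i)),
        Finset.sum_congr rfl (fun j _ => Int.toNat_of_nonneg (hq j))]
      exact hall S
    have h3' : ∑ i ∈ S, (p i).toNat
        ≤ ∑ j ∈ univ.filter (fun t => ∃ s ∈ S, (s, t) ∈ E), (q j).toNat := by
      exact_mod_cast h3
    omega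
  obtain ⟨f, hfinj, hft⟩ :=
    (Finset.all_card_le_biUnion_card_iff_existsInjective' t).mp hall'
  have hcard : Fintype.card (Σ i : Fin n, Fin (p i).toNat)
      = Fintype.card (Σ j : Fin m, Fin (q j).toNat) := by
    simp only [Fintype.card_sigma, Fintype.card_fin]
    have : (∑ i, (p i).toNat : ℤ) = (∑ j, (q j).toNat : ℤ) := by
      push_cast
      rw [Finset.sum_congr rfl (fun i _ => Int.toNat_of_nonneg (hp i)),
        Finset.sum_congr rfl (fun j _ => Int.toNat_of_nonneg (hq j))]
      exact hsum
    exact_mod_cast this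
  have hbij : Function.Bijective f :=
    (Fintype.bijective_iff_injective_and_card f).mpr ⟨hfinj, hcard⟩
  have hE : ∀ a, (a.1, (f a).1) ∈ E := by
    intro a
    have := hft a
    simpa only [ht, mem_filter, mem_univ, true_and] using this
  refine ⟨fun i j => ((univ.filter fun a : (Σ i : Fin n, Fin (p i).toNat) =>
      a.1 = i ∧ (f a).1 = j).card : ℝ), ?_, ?_, ?_, ?_⟩
  · intro i j
    positivity
  · intro i j hij
    have hempty : (univ.filter fun a : (Σ i : Fin n, Fin (p i).toNat) =>
        a.1 = i ∧ (f a).1 = j) = ∅ := by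
      rw [Finset.filter_eq_empty_iff]
      rintro a - ⟨h1, h2⟩
      exact hij (h1 ▸ h2 ▸ hE a)
    simp [hempty]
  · intro i
    have key : ∑ j, (univ.filter fun a : (Σ i : Fin n, Fin (p i).toNat) =>
        a.1 = i ∧ (f a).1 = j).card = (p i).toNat := by
      have h := card_eq_sum_card_fiberwise
        (s := univ.filter fun a : (Σ i : Fin n, Fin (p i).toNat) => a.1 = i)
        (f := fun a => (f a).1) (t := (univ : Finset (Fin m)))
        (fun a _ => mem_univ _)
      rw [fiber_card] at h
      rw [h]
      refine Finset.sum_congr rfl fun j _ => ?_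
      rw [Finset.filter_filter]
    rw [show ((p i : ℝ)) = ((p i).toNat : ℝ) by
      exact_mod_cast congrArg (fun z : ℤ => (z : ℝ)) (Int.toNat_of_nonneg (hp i)).symm]
    beta_reduce
    exact_mod_cast key
  · intro j
    have key : ∑ i, (univ.filter fun a : (Σ i : Fin n, Fin (p i).toNat) =>
        a.1 = i ∧ (f a).1 = j).card = (q j).toNat := by
      have h := card_eq_sum_card_fiberwise
        (s := univ.filter fun a : (Σ i : Fin n, Fin (p i).toNat) => (f a).1 = j)
        (f := Sigma.fst) (t := (univ : Finset (Fin n)))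
        (fun a _ => mem_univ _)
      have h2 : (univ.filter fun a : (Σ i : Fin n, Fin (p i).toNat) => (f a).1 = j).card
          = (univ.filter fun b : (Σ j : Fin m, Fin (q j).toNat) => b.1 = j).card := by
        refine Finset.card_bij (fun a _ => f a) ?_ ?_ ?_
        · intro a ha
          simp only [mem_filter, mem_univ, true_and] at ha ⊢
          exact ha
        · intro a ha a' ha' hfa
          exact hfinj hfa
        · intro b hb
          obtain ⟨a, rfl⟩ := hbij.surjective b
          simp only [mem_filter, mem_univ, true_and] at hb
          exact ⟨a, by simp [hb], rfl⟩
      rw [h2, fiber_card] at h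
      rw [h]
      refine Finset.sum_congr rfl fun i _ => ?_
      rw [Finset.filter_filter]
      congr 1
      ext a
      simp [and_comm]
    rw [show ((q j : ℝ)) = ((q j).toNat : ℝ) by
      exact_mod_cast congrArg (fun z : ℤ => (z : ℝ)) (Int.toNat_of_nonneg (hq j)).symm]
    beta_reduce
    exact_mod_cast key
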